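/- Let n ≥ 1 and let E be an n×n matrix with nonnegative real entries such that some power E^u has all entries strictly positive, and let λ > 0 and v ∈ ℝ^n be such that v has all entries strictly positive, E·v = λ·v, and every complex eigenvalue μ of E with μ ≠ λ satisfies |μ| < λ. Then for every vector w ∈ ℝ^n with all entries strictly positive there exists a real number a > 0 such that lim_{m→∞} E^m·w / λ^m = a·v. -/

import Mathlib

open Matrix

/-- `μ ∈ ℂ` is an eigenvalue of the real matrix `E`. -/
def Matrix.HasComplexEigenvalue {n : ℕ} (E : Matrix (Fin n) (Fin n) ℝ) (μ : ℂ) : Prop :=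
  ∃ z : Fin n → ℂ, z ≠ 0 ∧ (E.map (Complex.ofReal ·)) *ᵥ z = μ • z

/-- **Perron–Frobenius theorem (primitive case), second part.**  Let `E` be a nonnegative real
square matrix some power of which is strictly positive, `lam > 0` a dominant eigenvalue with
strictly positive eigenvector `v`.  Then for every strictly positive vector `w` the normalized
iterates `E^m w / lam^m` converge to `a • v` for some `a > 0`. -/
theorem perron_frobenius_power_limit
    (n : ℕ) (hn : 1 ≤ n) (E : Matrix (Fin n) (Fin n) ℝ)
    (hE : ∀ i j, 0 ≤ E i j) (hpos : ∃ u : ℕ, ∀ i j, 0 < (E ^ u) i j)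
    (lam : ℝ) (hlam : 0 < lam) (v : Fin n → ℝ) (hv : ∀ i, 0 < v i)
    (heig : E *ᵥ v = lam • v)
    (hdom : ∀ μ : ℂ, E.HasComplexEigenvalue μ → μ ≠ (lam : ℂ) → ‖μ‖ < lam) :
    ∀ w : Fin n → ℝ, (∀ i, 0 < w i) →
      ∃ a : ℝ, 0 < a ∧
        Filter.Tendsto (fun m : ℕ => (lam ^ m)⁻¹ • ((E ^ m) *ᵥ w)) Filter.atTop
          (nhds (a • v)) := by
  intro w hw
  haveI : NeZero n := ⟨by omega⟩
  have hne : (Finset.univ : Finset (Fin n)).Nonempty := Finset.univ_nonempty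
  have hne2 : (Finset.univ : Finset (Fin n × Fin n)).Nonempty := Finset.univ_nonempty
  obtain ⟨u, hu⟩ := hpos
  set B : Matrix (Fin n) (Fin n) ℝ := lam⁻¹ • E with hBdef
  have hBnn : ∀ i j, 0 ≤ B i j := fun i j =>
    mul_nonneg (inv_nonneg.2 hlam.le) (hE i j)
  have hBv : B *ᵥ v = v := by
    rw [hBdef, smul_mulVec, heig, smul_smul, inv_mul_cancel₀ hlam.ne', one_smul]
  have hBkv : ∀ k : ℕ, (B ^ k) *ᵥ v = v := by
    intro k
    induction k with
    | zero => simp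
    | succ k ih => rw [pow_succ', ← Matrix.mulVec_mulVec, ih, hBv]
  set A : Matrix (Fin n) (Fin n) ℝ := B ^ u with hAdef
  have hApow : A = (lam ^ u)⁻¹ • E ^ u := by rw [hAdef, hBdef, smul_pow, inv_pow]
  have hApos : ∀ i j, 0 < A i j := by
    intro i j
    rw [hApow]
    exact mul_pos (inv_pos.2 (pow_pos hlam u)) (hu i j)
  have hAv : A *ᵥ v = v := hBkv u
  -- the iterates
  set x : ℕ → Fin n → ℝ := fun m => (B ^ m) *ᵥ w with hxdef
  set r : ℕ → ℝ := fun m => Finset.univ.inf' hne (fun i => x m i / v i) with hrdef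
  set R : ℕ → ℝ := fun m => Finset.univ.sup' hne (fun i => x m i / v i) with hRdef
  -- the fundamental sum identity
  have key_sum : ∀ (C : Matrix (Fin n) (Fin n) ℝ), C *ᵥ v = v →
      ∀ (y : Fin n → ℝ) (c : ℝ) (i : Fin n),
        (C *ᵥ y) i - c * v i = ∑ j, C i j * (y j - c * v j) := by
    intro C hCv y c i
    have h1 : ∑ j, C i j * v j = v i := by
      have := congrFun hCv i
      simpa [Matrix.mulVec, dotProduct] using this
    simp only [Matrix.mulVec, dotProduct, mul_sub, Finset.sum_sub_distrib]
    rw [show ∑ j, C i j * (c * v j) = c * ∑ j, C i j * v j by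
      rw [Finset.mul_sum]; congr 1; ext j; ring, h1]
  -- pointwise bounds: r m * v ≤ x m ≤ R m * v
  have hlb : ∀ m i, r m * v i ≤ x m i := by
    intro m i
    have : r m ≤ x m i / v i := Finset.inf'_le _ (Finset.mem_univ i)
    exact (le_div_iff₀ (hv i)).1 this
  have hub : ∀ m i, x m i ≤ R m * v i := by
    intro m i
    have : x m i / v i ≤ R m :=
      Finset.le_sup' (fun j => x m j / v j) (Finset.mem_univ i)
    exact (div_le_iff₀ (hv i)).1 this
  have hx_succ : ∀ m, x (m + 1) = B *ᵥ x m := by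
    intro m
    show (B ^ (m + 1)) *ᵥ w = B *ᵥ ((B ^ m) *ᵥ w)
    rw [pow_succ', ← Matrix.mulVec_mulVec]
  -- monotonicity of r and R
  have hstep_lb : ∀ m i, r m * v i ≤ x (m + 1) i := by
    intro m i
    have hsum : x (m + 1) i - r m * v i = ∑ j, B i j * (x m j - r m * v j) := by
      rw [hx_succ m]; exact key_sum B hBv (x m) (r m) i
    have hnn : 0 ≤ ∑ j, B i j * (x m j - r m * v j) :=
      Finset.sum_nonneg fun j _ => mul_nonneg (hBnn i j) (sub_nonneg.2 (hlb m j))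
    linarith
  have hstep_ub : ∀ m i, x (m + 1) i ≤ R m * v i := by
    intro m i
    have hsum : x (m + 1) i - R m * v i = ∑ j, B i j * (x m j - R m * v j) := by
      rw [hx_succ m]; exact key_sum B hBv (x m) (R m) i
    have hnp : ∑ j, B i j * (x m j - R m * v j) ≤ 0 :=
      Finset.sum_nonpos fun j _ =>
        mul_nonpos_of_nonneg_of_nonpos (hBnn i j) (sub_nonpos.2 (hub m j))
    linarith
  have hr_mono : Monotone r := by
    apply monotone_nat_of_le_succ
    intro m
    apply Finset.le_inf'
    intro i _
    exact (le_div_iff₀ (hv i)).2 (hstep_lb m i)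
  have hR_anti : Antitone R := by
    apply antitone_nat_of_succ_le
    intro m
    apply Finset.sup'_le
    intro i _
    exact (div_le_iff₀ (hv i)).2 (hstep_ub m i)
  have hrR : ∀ m, r m ≤ R m := by
    intro m
    obtain ⟨i⟩ := ‹NeZero n›.out |> fun _ => (inferInstance : Nonempty (Fin n))
    exact le_trans (Finset.inf'_le (fun j => x m j / v j) (Finset.mem_univ i))
      (Finset.le_sup' (fun j => x m j / v j) (Finset.mem_univ i))
  -- the contraction constant
  set θ : ℝ := Finset.univ.inf' hne2 (fun p : Fin n × Fin n => A p.1 p.2 * v p.2 / v p.1)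
    with hθdef
  have hθpos : 0 < θ := by
    show 0 < Finset.univ.inf' hne2 fun p : Fin n × Fin n => A p.1 p.2 * v p.2 / v p.1
    rw [Finset.lt_inf'_iff]
    intro p _
    exact div_pos (mul_pos (hApos p.1 p.2) (hv p.2)) (hv p.1)
  have hθle : ∀ i k, θ * v i ≤ A i k * v k := by
    intro i k
    have : θ ≤ A i k * v k / v i := Finset.inf'_le _ (Finset.mem_univ (i, k))
    exact (le_div_iff₀ (hv i)).1 this
  -- contraction estimate
  have hcontr : ∀ m, R (m + u) - r (m + u) ≤ (1 - 2 * θ) * (R m - r m) := by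
    intro m
    have hx_u : x (m + u) = A *ᵥ x m := by
      show (B ^ (m + u)) *ᵥ w = (B ^ u) *ᵥ ((B ^ m) *ᵥ w)
      rw [add_comm m u, pow_add, ← Matrix.mulVec_mulVec]
    have hd : 0 ≤ R m - r m := sub_nonneg.2 (hrR m)
    obtain ⟨k, -, hk⟩ := Finset.exists_mem_eq_sup' hne (fun i => x m i / v i)
    obtain ⟨k', -, hk'⟩ := Finset.exists_mem_eq_inf' hne (fun i => x m i / v i)
    have hk2 : R m = x m k / v k := hk
    have hxk : x m k = R m * v k := by
      rw [hk2, div_mul_cancel₀ _ (hv k).ne']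
    have hk2' : r m = x m k' / v k' := hk'
    have hxk' : x m k' = r m * v k' := by
      rw [hk2', div_mul_cancel₀ _ (hv k').ne']
    -- lower bound for r (m + u)
    have hrlow : r m + θ * (R m - r m) ≤ r (m + u) := by
      apply Finset.le_inf'
      intro i _
      rw [le_div_iff₀ (hv i)]
      have hsum : x (m + u) i - r m * v i = ∑ j, A i j * (x m j - r m * v j) := by
        rw [hx_u]; exact key_sum A hAv (x m) (r m) i
      have hsingle : A i k * (x m k - r m * v k) ≤ ∑ j, A i j * (x m j - r m * v j) :=
        Finset.single_le_sum
          (fun j _ => mul_nonneg (hApos i j).le (sub_nonneg.2 (hlb m j)))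
          (Finset.mem_univ k)
      have h1 : A i k * (x m k - r m * v k) = (A i k * v k) * (R m - r m) := by
        rw [hxk]; ring
      have h2 : θ * v i * (R m - r m) ≤ (A i k * v k) * (R m - r m) :=
        mul_le_mul_of_nonneg_right (hθle i k) hd
      nlinarith [hsum, hsingle]
    -- upper bound for R (m + u)
    have hRhigh : R (m + u) ≤ R m - θ * (R m - r m) := by
      apply Finset.sup'_le
      intro i _
      rw [div_le_iff₀ (hv i)]
      have hsum : x (m + u) i - R m * v i = ∑ j, A i j * (x m j - R m * v j) := by
        rw [hx_u]; exact key_sum A hAv (x m) (R m) i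
      have hsingle : A i k' * (R m * v k' - x m k')
          ≤ ∑ j, A i j * (R m * v j - x m j) :=
        Finset.single_le_sum
          (fun j _ => mul_nonneg (hApos i j).le (sub_nonneg.2 (hub m j)))
          (Finset.mem_univ k')
      have hneg : ∑ j, A i j * (R m * v j - x m j)
          = -(∑ j, A i j * (x m j - R m * v j)) := by
        rw [← Finset.sum_neg_distrib]
        congr 1; ext j; ring
      have h1 : A i k' * (R m * v k' - x m k') = (A i k' * v k') * (R m - r m) := by
        rw [hxk']; ring
      have h2 : θ * v i * (R m - r m) ≤ (A i k' * v k') * (R m - r m) :=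
        mul_le_mul_of_nonneg_right (hθle i k') hd
      nlinarith [hsum, hsingle, hneg]
    nlinarith [hrlow, hRhigh]
  -- iterate the contraction
  set q : ℝ := max (1 - 2 * θ) 0 with hqdef
  have hq0 : 0 ≤ q := le_max_right _ _
  have hq1 : q < 1 := max_lt (by linarith) one_pos
  have hcq : ∀ m, R (m + u) - r (m + u) ≤ q * (R m - r m) := by
    intro m
    exact (hcontr m).trans
      (mul_le_mul_of_nonneg_right (le_max_left _ _) (sub_nonneg.2 (hrR m)))
  have hiter : ∀ k : ℕ, R (k * u) - r (k * u) ≤ q ^ k * (R 0 - r 0) := by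
    intro k
    induction k with
    | zero => simp
    | succ k ih =>
        have h1 : R (k * u + u) - r (k * u + u) ≤ q * (R (k * u) - r (k * u)) := hcq _
        have h2 : q * (R (k * u) - r (k * u)) ≤ q * (q ^ k * (R 0 - r 0)) :=
          mul_le_mul_of_nonneg_left ih hq0
        have h3 : (k + 1) * u = k * u + u := by ring
        rw [h3, pow_succ]
        nlinarith [h1, h2]
  -- the limits
  have hbdd_r : BddAbove (Set.range r) := by
    refine ⟨R 0, ?_⟩
    rintro _ ⟨m, rfl⟩
    exact (hrR m).trans (hR_anti (Nat.zero_le m))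
  have hbdd_R : BddBelow (Set.range R) := by
    refine ⟨r 0, ?_⟩
    rintro _ ⟨m, rfl⟩
    exact (hr_mono (Nat.zero_le m)).trans (hrR m)
  set a : ℝ := ⨆ m, r m with hadef
  set b : ℝ := ⨅ m, R m with hbdef'
  have hra : Filter.Tendsto r Filter.atTop (nhds a) := tendsto_atTop_ciSup hr_mono hbdd_r
  have hRb : Filter.Tendsto R Filter.atTop (nhds b) := tendsto_atTop_ciInf hR_anti hbdd_R
  have hab : a ≤ b := le_of_tendsto_of_tendsto' hra hRb hrR
  have hD : Filter.Tendsto (fun m => R m - r m) Filter.atTop (nhds (b - a)) := hRb.sub hra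
  have hDm : ∀ m, b - a ≤ R m - r m := by
    intro m
    refine le_of_tendsto hD ?_
    filter_upwards [Filter.eventually_ge_atTop m] with k hk
    exact sub_le_sub (hR_anti hk) (hr_mono hk)
  have hba : b - a ≤ 0 := by
    have h1 : Filter.Tendsto (fun k : ℕ => q ^ k * (R 0 - r 0)) Filter.atTop (nhds 0) := by
      simpa using (tendsto_pow_atTop_nhds_zero_of_lt_one hq0 hq1).mul_const (R 0 - r 0)
    exact le_of_tendsto_of_tendsto' tendsto_const_nhds h1
      (fun k => (hDm (k * u)).trans (hiter k))
  have hbeq : b = a := le_antisymm (by linarith) hab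
  have hRa : Filter.Tendsto R Filter.atTop (nhds a) := hbeq ▸ hRb
  -- positivity of the limit
  have hx0 : x 0 = w := by
    show (B ^ 0) *ᵥ w = w
    simp
  have hr0 : 0 < r 0 := by
    show 0 < Finset.univ.inf' hne fun i => x 0 i / v i
    rw [Finset.lt_inf'_iff]
    intro i _
    rw [hx0]
    exact div_pos (hw i) (hv i)
  have ha : 0 < a := hr0.trans_le (le_ciSup hbdd_r 0)
  refine ⟨a, ha, ?_⟩
  -- identify the normalized iterates with x
  have hxE : (fun m : ℕ => (lam ^ m)⁻¹ • ((E ^ m) *ᵥ w)) = x := by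
    funext m
    show (lam ^ m)⁻¹ • ((E ^ m) *ᵥ w) = ((lam⁻¹ • E) ^ m) *ᵥ w
    rw [smul_pow, inv_pow, smul_mulVec]
  rw [hxE, tendsto_pi_nhds]
  intro i
  have hlim : nhds ((a • v) i) = nhds (a * v i) := by simp [Pi.smul_apply, smul_eq_mul]
  rw [hlim]
  exact tendsto_of_tendsto_of_tendsto_of_le_of_le
    (hra.mul_const (v i)) (hRa.mul_const (v i)) (fun m => hlb m i) (fun m => hub m i)
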